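/- Let $(\Omega, \mathcal{A}, \mathbb{P})$ be a probability space and let $E = \mathbb{R}^n$ with its Euclidean inner product. Let $y : \Omega \to E$ be a random vector, $f : E \to E$ a measurable map with $f \circ y$ square-integrable, let $p, \varepsilon \in E$ be constants, and let $\eta : \Omega \to E$ be a square-integrable random vector independent of $y$ with $\mathbb{E}[\eta] = 0$. Define the second noisy observation $z = p + \varepsilon + \eta$. Then $\mathbb{E}\|f(y) - p\|^2 = \mathbb{E}\|f(y) - z\|^2 - \mathbb{E}\|\eta\|^2 - \|\varepsilon\|^2 + 2\,\langle \varepsilon,\; \mathbb{E}[f(y) - p] \rangle$. In particular, when $\varepsilon = 0$ the self-supervised objective $\mathbb{E}\|f(y) - z\|^2$ differs from the supervised objective $\mathbb{E}\|f(y) - p\|^2$ only by the constant $\mathbb{E}\|\eta\|^2$. -/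

import Mathlib

open MeasureTheory ProbabilityTheory
open scoped RealInnerProductSpace

/-- The self-supervised training identity (Eq. 17, Neighbor2Neighbor):
for a noisy observation `y`, clean target `p`, and second noisy observation
`z = p + ε + η` with `η` zero-mean, square-integrable, and independent of `y`,
`E‖f(y) - p‖² = E‖f(y) - z‖² - E‖η‖² - ‖ε‖² + 2⟨ε, E[f(y) - p]⟩`.
In particular, when `ε = 0`, the self-supervised objective differs from the
supervised one only by the constant `E‖η‖²`. -/
theorem frequencyCT_self_supervised_identity
    {Ω : Type*} [MeasureSpace Ω] [IsProbabilityMeasure (ℙ : Measure Ω)]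
    (n : ℕ)
    (y : Ω → EuclideanSpace ℝ (Fin n)) (hy : Measurable y)
    (f : EuclideanSpace ℝ (Fin n) → EuclideanSpace ℝ (Fin n)) (hf : Measurable f)
    (hfy : MemLp (fun ω => f (y ω)) 2 ℙ)
    (p ε : EuclideanSpace ℝ (Fin n))
    (η : Ω → EuclideanSpace ℝ (Fin n)) (hη : Measurable η)
    (hη2 : MemLp η 2 ℙ) (hηmean : ∫ ω, η ω ∂ℙ = 0)
    (hindep : IndepFun η y ℙ)
    (z : Ω → EuclideanSpace ℝ (Fin n)) (hz : ∀ ω, z ω = p + ε + η ω) :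
    (∫ ω, ‖f (y ω) - p‖ ^ 2 ∂ℙ) =
      (∫ ω, ‖f (y ω) - z ω‖ ^ 2 ∂ℙ) - (∫ ω, ‖η ω‖ ^ 2 ∂ℙ) - ‖ε‖ ^ 2
        + 2 * ⟪ε, ∫ ω, (f (y ω) - p) ∂ℙ⟫ ∧
    (ε = 0 → (∫ ω, ‖f (y ω) - z ω‖ ^ 2 ∂ℙ) =
      (∫ ω, ‖f (y ω) - p‖ ^ 2 ∂ℙ) + (∫ ω, ‖η ω‖ ^ 2 ∂ℙ)) := by
  set g : Ω → EuclideanSpace ℝ (Fin n) := fun ω => f (y ω) - p with hgdef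
  have hg2 : MemLp g 2 ℙ := hfy.sub (memLp_const p)
  have hg1 : Integrable g ℙ := hg2.integrable one_le_two
  have hη1 : Integrable η ℙ := hη2.integrable one_le_two
  have hgsq : Integrable (fun ω => ‖g ω‖ ^ 2) ℙ := hg2.norm.integrable_sq
  have hηsq : Integrable (fun ω => ‖η ω‖ ^ 2) ℙ := hη2.norm.integrable_sq
  -- component facts
  have hgi : ∀ i, MemLp (fun ω => g ω i) 2 ℙ :=
    fun i => (EuclideanSpace.proj (𝕜 := ℝ) i).comp_memLp' hg2
  have hηi : ∀ i, MemLp (fun ω => η ω i) 2 ℙ :=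
    fun i => (EuclideanSpace.proj (𝕜 := ℝ) i).comp_memLp' hη2
  have hindep' : ∀ i : Fin n, IndepFun (fun ω => g ω i) (fun ω => η ω i) ℙ := by
    intro i
    have := (hindep.symm).comp
      (φ := fun x : EuclideanSpace ℝ (Fin n) => (f x - p) i)
      (ψ := fun x : EuclideanSpace ℝ (Fin n) => x i)
      (((EuclideanSpace.proj (𝕜 := ℝ) i).measurable).comp (hf.sub measurable_const))
      ((EuclideanSpace.proj (𝕜 := ℝ) i).measurable)
    exact this
  have hmul_int : ∀ i : Fin n, Integrable (fun ω => g ω i * η ω i) ℙ := by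
    intro i
    exact (hindep' i).integrable_mul ((hgi i).integrable one_le_two)
      ((hηi i).integrable one_le_two)
  have hηi_mean : ∀ i : Fin n, (∫ ω, η ω i ∂ℙ) = 0 := by
    intro i
    have := (EuclideanSpace.proj (𝕜 := ℝ) i).integral_comp_comm hη1
    simpa [hηmean] using this
  have hmul_zero : ∀ i : Fin n, (∫ ω, g ω i * η ω i ∂ℙ) = 0 := by
    intro i
    have h := (hindep' i).integral_fun_mul_eq_mul_integral ((hgi i).integrable one_le_two).aestronglyMeasurable
      ((hηi i).integrable one_le_two).aestronglyMeasurable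
    rw [hηi_mean i, mul_zero] at h
    exact h
  -- inner product of g and η
  have hinner_int : Integrable (fun ω => ⟪g ω, η ω⟫) ℙ := by
    have : (fun ω => ⟪g ω, η ω⟫) = fun ω => ∑ i, g ω i * η ω i := by
      funext ω
      simp [PiLp.inner_apply, RCLike.inner_apply, conj_trivial, mul_comm]
    rw [this]
    exact integrable_finset_sum _ fun i _ => hmul_int i
  have hinner_zero : (∫ ω, ⟪g ω, η ω⟫ ∂ℙ) = 0 := by
    have h1 : (fun ω => ⟪g ω, η ω⟫) = fun ω => ∑ i, g ω i * η ω i := by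
      funext ω
      simp [PiLp.inner_apply, RCLike.inner_apply, conj_trivial, mul_comm]
    rw [h1, integral_finset_sum _ fun i _ => hmul_int i]
    simp [hmul_zero]
  have hεη_int : Integrable (fun ω => ⟪ε, η ω⟫) ℙ := by
    simpa [Function.comp_def] using ((innerSL ℝ ε).comp_memLp' hη2).integrable one_le_two
  have hεη_zero : (∫ ω, ⟪ε, η ω⟫ ∂ℙ) = 0 := by
    rw [integral_inner hη1 ε, hηmean, inner_zero_right]
  have hgε_int : Integrable (fun ω => ⟪g ω, ε⟫) ℙ := by
    have : (fun ω => ⟪g ω, ε⟫) = fun ω => ⟪ε, g ω⟫ := by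
      funext ω; exact real_inner_comm _ _
    rw [this]
    simpa [Function.comp_def] using ((innerSL ℝ ε).comp_memLp' hg2).integrable one_le_two
  have hgε : (∫ ω, ⟪g ω, ε⟫ ∂ℙ) = ⟪ε, ∫ ω, g ω ∂ℙ⟫ := by
    have : (fun ω => ⟪g ω, ε⟫) = fun ω => ⟪ε, g ω⟫ := by
      funext ω; exact real_inner_comm _ _
    rw [this, integral_inner hg1 ε]
  -- pointwise expansion
  have key : ∀ ω, ‖f (y ω) - z ω‖ ^ 2 =
      ‖g ω‖ ^ 2 + ‖ε‖ ^ 2 + ‖η ω‖ ^ 2 + 2 * ⟪ε, η ω⟫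
        - 2 * ⟪g ω, ε⟫ - 2 * ⟪g ω, η ω⟫ := by
    intro ω
    have h1 : f (y ω) - z ω = g ω - (ε + η ω) := by
      rw [hz]; simp [hgdef]; abel
    rw [h1, norm_sub_sq_real, norm_add_sq_real, inner_add_right]
    ring
  have hint : (∫ ω, ‖f (y ω) - z ω‖ ^ 2 ∂ℙ) =
      (∫ ω, ‖g ω‖ ^ 2 ∂ℙ) + ‖ε‖ ^ 2 + (∫ ω, ‖η ω‖ ^ 2 ∂ℙ)
        - 2 * ⟪ε, ∫ ω, g ω ∂ℙ⟫ := by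
    have I1 : Integrable (fun ω => ‖g ω‖ ^ 2 + ‖ε‖ ^ 2) ℙ := hgsq.add (integrable_const _)
    have I2 : Integrable (fun ω => ‖g ω‖ ^ 2 + ‖ε‖ ^ 2 + ‖η ω‖ ^ 2) ℙ := I1.add hηsq
    have I3 : Integrable (fun ω => ‖g ω‖ ^ 2 + ‖ε‖ ^ 2 + ‖η ω‖ ^ 2 + 2 * ⟪ε, η ω⟫) ℙ :=
      I2.add (hεη_int.const_mul 2)
    have I4 : Integrable (fun ω => ‖g ω‖ ^ 2 + ‖ε‖ ^ 2 + ‖η ω‖ ^ 2 + 2 * ⟪ε, η ω⟫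
        - 2 * ⟪g ω, ε⟫) ℙ := I3.sub (hgε_int.const_mul 2)
    simp only [key]
    rw [integral_sub I4 (hinner_int.const_mul 2),
      integral_sub I3 (hgε_int.const_mul 2),
      integral_add I2 (hεη_int.const_mul 2),
      integral_add I1 hηsq,
      integral_add hgsq (integrable_const _),
      integral_const_mul, integral_const_mul, integral_const_mul,
      hεη_zero, hinner_zero, hgε]
    simp [measure_univ]
  constructor
  · rw [hint]; ring
  · intro hε
    subst hε
    rw [hint]
    simp [inner_zero_left, hgdef]
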